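/- arXiv:0707.0082 — 4 statements merged into one kernel-verified Lean document; each statement's English description precedes it below -/
import Mathlib

section
/- Let H be a real Hilbert space, S a closed subspace with orthogonal projection P, and U a nonempty subset closed under f ↦ 2·Pf - f. Then for every g ∈ H with P g ∈ U, sup_{f ∈ U} ‖g - f‖² ≥ sup_{f ∈ U} ‖P g - f‖². -/
open RealInnerProductSpace

/-- If `U` is nonempty and closed under reflection across the closed subspace `S`, then for
every `g` with `P g ∈ U`, projecting `g` onto `S` does not increase the worst-case error. -/
theorem stmt3 {H : Type*} [NormedAddCommGroup H] [InnerProductSpace ℝ H] [CompleteSpace H]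
    (S : Submodule ℝ H) (hScl : IsClosed (S : Set H)) (P : H → H)
    (hPmem : ∀ f, P f ∈ S) (hPorth : ∀ f, f - P f ∈ Sᗮ)
    (U : Set H) (hne : U.Nonempty) (hrefl : ∀ f ∈ U, (2 : ℝ) • P f - f ∈ U)
    (g : H) (hg : P g ∈ U) :
    (⨆ f ∈ U, ((‖P g - f‖ ^ 2 : ℝ) : EReal)) ≤ (⨆ f ∈ U, ((‖g - f‖ ^ 2 : ℝ) : EReal)) := by
  refine iSup₂_le fun f hf => ?_
  set f' : H := (2 : ℝ) • P f - f with hf'def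
  have hf' : f' ∈ U := hrefl f hf
  -- orthogonality facts
  have hb : P g - P f ∈ S := sub_mem (hPmem g) (hPmem f)
  have hc : P f - f ∈ Sᗮ := by
    have := Sᗮ.neg_mem (hPorth f); simpa [neg_sub] using this
  have ha : g - P g ∈ Sᗮ := hPorth g
  have i1 : ⟪P g - P f, P f - f⟫ = 0 := Submodule.inner_right_of_mem_orthogonal hb hc
  have i2 : ⟪g - P g, P g - P f⟫ = 0 := by
    rw [real_inner_comm]; exact Submodule.inner_right_of_mem_orthogonal hb ha
  -- Pythagoras
  have e1 : ‖P g - f‖ ^ 2 = ‖P g - P f‖ ^ 2 + ‖P f - f‖ ^ 2 := by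
    rw [show P g - f = (P g - P f) + (P f - f) from (sub_add_sub_cancel _ _ _).symm,
      norm_add_sq_real, i1]; ring
  have e2 : ‖g - P f‖ ^ 2 = ‖g - P g‖ ^ 2 + ‖P g - P f‖ ^ 2 := by
    rw [show g - P f = (g - P g) + (P g - P f) from (sub_add_sub_cancel _ _ _).symm,
      norm_add_sq_real, i2]; ring
  -- parallelogram law
  have par := parallelogram_law_with_norm ℝ (g - P f) (P f - f)
  have hx : (g - P f) + (P f - f) = g - f := sub_add_sub_cancel _ _ _
  have hy : (g - P f) - (P f - f) = g - f' := by
    rw [hf'def, two_smul]; abel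
  rw [hx, hy] at par
  -- key real inequality
  have key : 2 * ‖P g - f‖ ^ 2 ≤ ‖g - f‖ ^ 2 + ‖g - f'‖ ^ 2 := by
    nlinarith [sq_nonneg ‖g - P g‖, sq_nonneg (‖g - f‖), sq_nonneg (‖g - f'‖)]
  have hmax : ‖P g - f‖ ^ 2 ≤ max (‖g - f‖ ^ 2) (‖g - f'‖ ^ 2) := by
    rcases le_total (‖g - f‖ ^ 2) (‖g - f'‖ ^ 2) with h | h
    · rw [max_eq_right h]; linarith
    · rw [max_eq_left h]; linarith
  have h1 : ((‖g - f‖ ^ 2 : ℝ) : EReal) ≤ ⨆ f ∈ U, ((‖g - f‖ ^ 2 : ℝ) : EReal) :=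
    le_iSup₂_of_le f hf le_rfl
  have h2 : ((‖g - f'‖ ^ 2 : ℝ) : EReal) ≤ ⨆ f ∈ U, ((‖g - f‖ ^ 2 : ℝ) : EReal) :=
    le_iSup₂_of_le f' hf' le_rfl
  rcases le_max_iff.1 hmax with h | h
  · exact le_trans (EReal.coe_le_coe_iff.2 h) h1
  · exact le_trans (EReal.coe_le_coe_iff.2 h) h2
end

section
/- Let 𝐊 be symmetric positive definite, y ∈ ℝ^N, λ > 0, and set x̂ = 𝐊(𝐊 + λI)⁻¹y and Δ = λ‖(𝐊+λI)⁻¹y‖₂. Then x̂ is the unique minimizer of x ↦ xᵀ𝐊⁻¹x over the closed Euclidean ball B₂(y, Δ) = {x : ‖x - y‖₂ ≤ Δ}. -/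
open Matrix

lemma dot_self_nonneg {N : ℕ} (v : Fin N → ℝ) : 0 ≤ v ⬝ᵥ v :=
  Finset.sum_nonneg fun i _ => mul_self_nonneg (v i)

lemma dot_cs {N : ℕ} (u v : Fin N → ℝ) :
    -(Real.sqrt (u ⬝ᵥ u) * Real.sqrt (v ⬝ᵥ v)) ≤ u ⬝ᵥ v := by
  have h : (u ⬝ᵥ v) ^ 2 ≤ (u ⬝ᵥ u) * (v ⬝ᵥ v) := by
    simpa [dotProduct, pow_two, mul_pow] using
      Finset.sum_mul_sq_le_sq_mul_sq Finset.univ u v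
  have habs : |u ⬝ᵥ v| ≤ Real.sqrt (u ⬝ᵥ u) * Real.sqrt (v ⬝ᵥ v) := by
    rw [← Real.sqrt_sq_eq_abs, ← Real.sqrt_mul (dot_self_nonneg u)]
    exact Real.sqrt_le_sqrt h
  linarith [neg_abs_le (u ⬝ᵥ v)]

/-- With `x̂ = 𝐊(𝐊 + λI)⁻¹y` and `Δ = λ‖(𝐊+λI)⁻¹y‖₂`, the vector `x̂` is the unique
minimizer of `x ↦ xᵀ𝐊⁻¹x` over the closed Euclidean ball `B₂(y, Δ)`. -/
theorem stmt14 {N : ℕ} (Km : Matrix (Fin N) (Fin N) ℝ)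
    (hsym : Km.IsSymm) (hpd : Km.PosDef)
    (y : Fin N → ℝ) (hy : y ≠ 0) (l : ℝ) (hl : 0 < l)
    (hh xh : Fin N → ℝ)
    (hhh : hh = (Km + l • (1 : Matrix (Fin N) (Fin N) ℝ))⁻¹.mulVec y)
    (hxh : xh = Km.mulVec hh)
    (Δ : ℝ) (hΔ : Δ = l * Real.sqrt (hh ⬝ᵥ hh)) :
    Real.sqrt ((xh - y) ⬝ᵥ (xh - y)) ≤ Δ ∧
    (∀ x : Fin N → ℝ, Real.sqrt ((x - y) ⬝ᵥ (x - y)) ≤ Δ → x ≠ xh →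
      xh ⬝ᵥ Km⁻¹.mulVec xh < x ⬝ᵥ Km⁻¹.mulVec x) := by
  set A : Matrix (Fin N) (Fin N) ℝ := Km + l • (1 : Matrix (Fin N) (Fin N) ℝ) with hA
  have hApd : A.PosDef := by
    refine Matrix.PosDef.of_dotProduct_mulVec_pos ?_ (fun x hx => ?_)
    · exact (Matrix.IsHermitian.add hpd.1 (by
        simp [Matrix.IsHermitian, Matrix.transpose_smul]))
    · have h1 : 0 < x ⬝ᵥ (Km *ᵥ x) := by simpa using hpd.dotProduct_mulVec_pos hx
      have h2 : 0 < x ⬝ᵥ x := by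
        have := hpd.posSemidef  -- unused; direct:
        have : x ⬝ᵥ x ≠ 0 := fun h => hx ((dotProduct_self_eq_zero).mp h)
        exact lt_of_le_of_ne (dot_self_nonneg x) (Ne.symm this)
      have : x ⬝ᵥ (A *ᵥ x) = x ⬝ᵥ (Km *ᵥ x) + l * (x ⬝ᵥ x) := by
        simp [hA, Matrix.add_mulVec, Matrix.smul_mulVec, Matrix.one_mulVec,
          dotProduct_add, dotProduct_smul, smul_eq_mul]
      simp only [star_trivial]
      rw [this]
      positivity
  have hAy : A *ᵥ hh = y := by
    rw [hhh, Matrix.mulVec_mulVec, Matrix.mul_nonsing_inv _ hApd.det_pos.ne'.isUnit,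
      Matrix.one_mulVec]
  have hdiff : xh - y = -(l • hh) := by
    rw [hxh, ← hAy]
    simp [hA, Matrix.add_mulVec, Matrix.smul_mulVec, Matrix.one_mulVec]
  have hdelta : Real.sqrt ((xh - y) ⬝ᵥ (xh - y)) = Δ := by
    rw [hdiff, hΔ]
    have : -(l • hh) ⬝ᵥ -(l • hh) = l ^ 2 * (hh ⬝ᵥ hh) := by
      simp [smul_dotProduct, dotProduct_smul, smul_eq_mul]; ring
    rw [this, Real.sqrt_mul (by positivity), Real.sqrt_sq hl.le]
  refine ⟨hdelta.le, fun x hx hne => ?_⟩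
  have hKu : IsUnit Km.det := hpd.det_pos.ne'.isUnit
  have hMxh : Km⁻¹ *ᵥ xh = hh := by
    rw [hxh, Matrix.mulVec_mulVec, Matrix.nonsing_inv_mul _ hKu, Matrix.one_mulVec]
  have hMsymm : Km⁻¹ᵀ = Km⁻¹ := by
    rw [Matrix.transpose_nonsing_inv, hsym]
  set d : Fin N → ℝ := x - xh with hd
  have hxeq : x = d + xh := by simp [hd]
  have key : x ⬝ᵥ Km⁻¹ *ᵥ x =
      d ⬝ᵥ Km⁻¹ *ᵥ d + 2 * (d ⬝ᵥ hh) + xh ⬝ᵥ Km⁻¹ *ᵥ xh := by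
    have hsy : xh ⬝ᵥ (Km⁻¹ *ᵥ d) = hh ⬝ᵥ d := by
      rw [Matrix.dotProduct_mulVec, ← Matrix.mulVec_transpose, hMsymm, hMxh]
    rw [hxeq]
    simp only [Matrix.mulVec_add, dotProduct_add, add_dotProduct, hMxh, hsy]
    rw [dotProduct_comm hh d]
    ring
  have hdpos : 0 < d ⬝ᵥ Km⁻¹ *ᵥ d := by
    have hd0 : d ≠ 0 := sub_ne_zero.mpr hne
    simpa using hpd.inv.dotProduct_mulVec_pos hd0
  have hdhh : 0 ≤ d ⬝ᵥ hh := by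
    have hxh' : xh = -(l • hh) + y := sub_eq_iff_eq_add.mp hdiff
    have hdd : d = (x - y) + l • hh := by rw [hd, hxh']; abel
    have hexp : d ⬝ᵥ hh = (x - y) ⬝ᵥ hh + l * (hh ⬝ᵥ hh) := by
      rw [hdd, add_dotProduct, smul_dotProduct, smul_eq_mul]
    have hcs := dot_cs (x - y) hh
    have hb : (0:ℝ) ≤ Real.sqrt (hh ⬝ᵥ hh) := Real.sqrt_nonneg _
    have hb2 : Real.sqrt (hh ⬝ᵥ hh) ^ 2 = hh ⬝ᵥ hh :=
      Real.sq_sqrt (dot_self_nonneg hh)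
    have ha : Real.sqrt ((x - y) ⬝ᵥ (x - y)) ≤ l * Real.sqrt (hh ⬝ᵥ hh) := by
      rw [← hΔ]; exact hx
    have ha0 : (0:ℝ) ≤ Real.sqrt ((x - y) ⬝ᵥ (x - y)) := Real.sqrt_nonneg _
    nlinarith [mul_le_mul_of_nonneg_right ha hb]
  rw [key]
  linarith
end

section
/- Let 𝐊 be symmetric positive definite, y ∈ ℝ^N, Δ > 0, and C = {x : ‖x - y‖_∞ ≤ Δ} (the ℓ∞ ball). Suppose h̃ = 𝐊⁻¹y has all entries nonzero and Δ ≤ (minᵢ |h̃ᵢ|) / (maxⱼ Σₙ |(𝐊⁻¹)_{jn}|). Then the minimizer x̂ of xᵀ𝐊⁻¹x over C is given componentwise by x̂ₙ = yₙ - Δ·sgn(h̃ₙ). -/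
open Matrix

/-- For the ℓ∞ ball `C = {x : ‖x - y‖_∞ ≤ Δ}`, if `h̃ = 𝐊⁻¹y` has all entries nonzero and
`Δ` is small enough, namely `Δ ≤ (minᵢ |h̃ᵢ|) / (maxⱼ Σₙ |(𝐊⁻¹)ⱼₙ|)`, then the minimizer
of `x ↦ xᵀ𝐊⁻¹x` over `C` is `x̂ₙ = yₙ - Δ·sgn(h̃ₙ)`. -/
theorem stmt17 {N : ℕ} [NeZero N] (Km : Matrix (Fin N) (Fin N) ℝ)
    (hsym : Km.IsSymm) (hpd : Km.PosDef)
    (y : Fin N → ℝ) (Δ : ℝ) (hΔpos : 0 < Δ)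
    (C : Set (Fin N → ℝ)) (hC : C = {x : Fin N → ℝ | ∀ n, |x n - y n| ≤ Δ})
    (ht : Fin N → ℝ) (hht : ht = Km⁻¹.mulVec y) (hnz : ∀ n, ht n ≠ 0)
    (hΔ : Δ ≤ (Finset.univ.inf' Finset.univ_nonempty fun i => |ht i|) /
      (Finset.univ.sup' Finset.univ_nonempty fun j => ∑ n, |Km⁻¹ j n|))
    (xh : Fin N → ℝ) (hxh : xh = fun n => y n - Δ * Real.sign (ht n)) :
    xh ∈ C ∧ ∀ x ∈ C, xh ⬝ᵥ Km⁻¹.mulVec xh ≤ x ⬝ᵥ Km⁻¹.mulVec x := by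
  set A := Km⁻¹ with hA
  have hApd : A.PosDef := hpd.inv
  have hAsym : Aᵀ = A := by
    rw [hA, Matrix.transpose_nonsing_inv, hsym.eq]
  -- sign vector
  set s : Fin N → ℝ := fun n => Real.sign (ht n) with hs
  have hsabs : ∀ n, |s n| = 1 := by
    intro n
    rcases lt_or_gt_of_ne (hnz n) with h | h
    · simp [hs, Real.sign_of_neg h]
    · simp [hs, Real.sign_of_pos h]
  -- membership
  have hmem : xh ∈ C := by
    rw [hC]
    intro n
    rw [hxh]
    simp only [sub_sub_cancel_left, abs_neg, abs_mul, abs_of_pos hΔpos, show |Real.sign (ht n)| = 1 from hsabs n, mul_one, le_refl]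
  refine ⟨hmem, ?_⟩
  -- ĥ = A x̂
  set hh : Fin N → ℝ := A.mulVec xh with hhh
  -- diagonal entries of A are positive
  have hdiag : ∀ j, 0 < A j j := by
    intro j
    have h1 : (Pi.single j 1 : Fin N → ℝ) ≠ 0 := by
      intro h
      have := congrFun h j
      simp at this
    have h2 := hApd.dotProduct_mulVec_pos h1
    simpa [dotProduct, mulVec, Pi.single_apply] using h2
  -- denominator positivity
  have hsup_pos : 0 < Finset.univ.sup' Finset.univ_nonempty fun j => ∑ n, |A j n| := by
    obtain ⟨j⟩ : Nonempty (Fin N) := Fin.pos_iff_nonempty.mp (Nat.pos_of_ne_zero (NeZero.ne N))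
    refine lt_of_lt_of_le ?_ (Finset.le_sup' (fun j => ∑ n, |A j n|) (Finset.mem_univ j))
    refine lt_of_lt_of_le (lt_of_lt_of_le (hdiag j) (le_abs_self _)) ?_
    exact Finset.single_le_sum (fun n _ => abs_nonneg (A j n)) (Finset.mem_univ j)
  have hΔsup : Δ * (Finset.univ.sup' Finset.univ_nonempty fun j => ∑ n, |A j n|) ≤
      Finset.univ.inf' Finset.univ_nonempty fun i => |ht i| := by
    rw [← le_div_iff₀ hsup_pos]; exact hΔ
  -- key perturbation bound: |hh j - ht j| ≤ |ht j|
  have hpert : ∀ j, |hh j - ht j| ≤ |ht j| := by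
    intro j
    have hdiff : hh j - ht j = -(Δ * (A.mulVec s) j) := by
      rw [hhh, hht, hxh]
      simp only [mulVec, dotProduct, ← Finset.sum_sub_distrib, Finset.mul_sum,
        ← Finset.sum_neg_distrib]
      refine Finset.sum_congr rfl fun n _ => ?_
      simp only [hs]
      ring
    have hAs : |(A.mulVec s) j| ≤ ∑ n, |A j n| := by
      have e : (A.mulVec s) j = ∑ n, A j n * s n := by simp [mulVec, dotProduct]
      rw [e]
      calc |∑ n, A j n * s n| ≤ ∑ n, |A j n * s n| := Finset.abs_sum_le_sum_abs _ _
        _ = ∑ n, |A j n| := by simp [abs_mul, hsabs]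
    have h1 : Δ * |(A.mulVec s) j| ≤ Δ * ∑ n, |A j n| :=
      mul_le_mul_of_nonneg_left hAs hΔpos.le
    have h2 : Δ * (∑ n, |A j n|) ≤
        Δ * Finset.univ.sup' Finset.univ_nonempty fun j => ∑ n, |A j n| :=
      mul_le_mul_of_nonneg_left (Finset.le_sup' (fun j => ∑ n, |A j n|) (Finset.mem_univ j))
        hΔpos.le
    have h3 : (Finset.univ.inf' Finset.univ_nonempty fun i => |ht i|) ≤ |ht j| :=
      Finset.inf'_le _ (Finset.mem_univ j)
    rw [hdiff, abs_neg, abs_mul, abs_of_pos hΔpos]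
    linarith
  -- sign agreement: s n * hh n = |hh n|
  have hsign : ∀ n, s n * hh n = |hh n| := by
    intro n
    rcases lt_or_gt_of_ne (hnz n) with h | h
    · have : hh n ≤ 0 := by
        have := (abs_le.mp (hpert n)).2
        have h2 : |ht n| = -ht n := abs_of_neg h
        linarith
      rw [hs]; simp only [Real.sign_of_neg h]
      rw [abs_of_nonpos this]; ring
    · have : 0 ≤ hh n := by
        have := (abs_le.mp (hpert n)).1
        have h2 : |ht n| = ht n := abs_of_pos h
        linarith
      rw [hs]; simp only [Real.sign_of_pos h]
      rw [abs_of_nonneg this]; ring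
  -- variational inequality: ∀ x ∈ C, 0 ≤ hh ⬝ᵥ (x - xh)
  intro x hx
  rw [hC] at hx
  have hvar : 0 ≤ hh ⬝ᵥ (x - xh) := by
    rw [dotProduct]
    refine Finset.sum_nonneg fun n _ => ?_
    have hxn : x n - xh n = (x n - y n) + Δ * s n := by
      simp only [hxh, hs]; ring
    have h1 : -(|hh n| * Δ) ≤ hh n * (x n - y n) := by
      have h2 : |hh n| * |x n - y n| ≤ |hh n| * Δ :=
        mul_le_mul_of_nonneg_left (hx n) (abs_nonneg _)
      have h3 : -(|hh n| * |x n - y n|) ≤ hh n * (x n - y n) := by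
        rw [← abs_mul]; exact neg_abs_le _
      linarith
    have h2 : hh n * (Δ * s n) = Δ * |hh n| := by
      rw [← hsign n]; ring
    have goal_eq : hh n * ((x - xh) n) = hh n * (x n - y n) + Δ * |hh n| := by
      simp only [Pi.sub_apply]
      rw [hxn, mul_add, h2]
    rw [goal_eq]
    nlinarith [abs_nonneg (hh n)]
  -- quadratic expansion
  have hdsym : ∀ v w : Fin N → ℝ, v ⬝ᵥ A.mulVec w = A.mulVec v ⬝ᵥ w := by
    intro v w
    rw [dotProduct_mulVec, ← Matrix.mulVec_transpose, hAsym]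
  have hpsd : 0 ≤ (x - xh) ⬝ᵥ A.mulVec (x - xh) := by
    have := hApd.posSemidef.dotProduct_mulVec_nonneg (x - xh)
    simpa using this
  have hexpand : x ⬝ᵥ A.mulVec x =
      xh ⬝ᵥ A.mulVec xh + 2 * (hh ⬝ᵥ (x - xh)) + (x - xh) ⬝ᵥ A.mulVec (x - xh) := by
    have hx' : x = xh + (x - xh) := by abel
    rw [hhh]
    nth_rewrite 1 [hx']; nth_rewrite 2 [hx']
    simp only [Matrix.mulVec_add, dotProduct_add, add_dotProduct]
    rw [dotProduct_comm (x - xh) (A.mulVec xh), hdsym xh (x - xh)]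
    ring
  linarith
end

section
/- Let 𝐊 = diag(σ₀²,…,σ_{N-1}²) with all σₙ² > 0, y ∈ ℝ^N, h̃ₙ = yₙ/σₙ², τ > 0, and define ĥₙ = h̃ₙ if |h̃ₙ| ≤ τ and ĥₙ = τ·sgn(h̃ₙ) otherwise; set x̂ = 𝐊ĥ and Δ = Σₙ σₙ²·max(|h̃ₙ| - τ, 0). Then x̂ minimizes xᵀ𝐊⁻¹x over the ℓ¹ ball C₁ = {x : Σₙ |xₙ - yₙ| ≤ Δ}, provided Δ > 0 and 0 ∉ C₁. -/
open Matrix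

/-- For a diagonal Gram matrix `𝐊 = diag(σ₀²,…)`, the clipped version `ĥ` of the nominal
coefficient vector `h̃ = 𝐊⁻¹y` (clipping threshold `τ`) yields, via `x̂ = 𝐊ĥ`, the
minimizer of `xᵀ𝐊⁻¹x` over the ℓ¹ ball `C₁ = {x : Σₙ|xₙ - yₙ| ≤ Δ}` with
`Δ = Σₙ σₙ²·(|h̃ₙ| - τ)⁺`, provided `Δ > 0` and `0 ∉ C₁`. -/
theorem stmt18 {N : ℕ} (s : Fin N → ℝ) (hs : ∀ n, 0 < s n)
    (Km : Matrix (Fin N) (Fin N) ℝ) (hKm : Km = Matrix.diagonal s)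
    (y : Fin N → ℝ) (τ : ℝ) (hτ : 0 < τ)
    (ht : Fin N → ℝ) (hht : ht = fun n => y n / s n)
    (hh : Fin N → ℝ)
    (hhh : hh = fun n => if |ht n| ≤ τ then ht n else τ * Real.sign (ht n))
    (xh : Fin N → ℝ) (hxh : xh = Km.mulVec hh)
    (Δ : ℝ) (hΔ : Δ = ∑ n, s n * max (|ht n| - τ) 0) (hΔpos : 0 < Δ)
    (C₁ : Set (Fin N → ℝ)) (hC₁ : C₁ = {x : Fin N → ℝ | ∑ n, |x n - y n| ≤ Δ})
    (h0 : (0 : Fin N → ℝ) ∉ C₁) :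
    xh ∈ C₁ ∧ ∀ x ∈ C₁, xh ⬝ᵥ Km⁻¹.mulVec xh ≤ x ⬝ᵥ Km⁻¹.mulVec x := by
  have hsne : ∀ n, s n ≠ 0 := fun n => (hs n).ne'
  have hy : ∀ n, y n = s n * ht n := by
    intro n; rw [hht]; dsimp only; rw [mul_div_assoc', mul_comm, mul_div_assoc, div_self (hsne n), mul_one]
  have hxhn : ∀ n, xh n = s n * hh n := by
    intro n; rw [hxh, hKm, Matrix.mulVec_diagonal]
  -- clipped vector is bounded by τ
  have habs : ∀ n, |hh n| ≤ τ := by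
    intro n; rw [hhh]; dsimp only
    split_ifs with h
    · exact h
    · rcases lt_trichotomy (ht n) 0 with h1 | h1 | h1
      · rw [Real.sign_of_neg h1]
        rw [abs_of_nonpos (by linarith)]
        linarith
      · exfalso; apply h; rw [h1]; simpa using hτ.le
      · rw [Real.sign_of_pos h1, mul_one, abs_of_pos hτ]
  -- coordinatewise: |xh n - y n| = s n * (|ht n| - τ)⁺
  have hcoord : ∀ n, |xh n - y n| = s n * max (|ht n| - τ) 0 := by
    intro n
    rw [hxhn n, hy n, hhh]; dsimp only
    split_ifs with h
    · rw [sub_self, abs_zero, max_eq_right (by linarith), mul_zero]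
    · push_neg at h
      rcases lt_trichotomy (ht n) 0 with h1 | h1 | h1
      · rw [Real.sign_of_neg h1]
        rw [abs_of_neg h1] at h
        rw [max_eq_left (by rw [abs_of_neg h1]; linarith)]
        rw [abs_of_nonneg (by nlinarith [(hs n).le])]
        rw [abs_of_neg h1]; ring
      · exfalso; rw [h1, abs_zero] at h; linarith
      · rw [Real.sign_of_pos h1, mul_one]
        rw [abs_of_pos h1] at h
        rw [max_eq_left (by rw [abs_of_pos h1]; linarith)]
        rw [abs_of_nonpos (by nlinarith [(hs n).le])]
        rw [abs_of_pos h1]; ring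
  -- coordinatewise: hh n * (y n - xh n) = τ * (s n * (|ht n| - τ)⁺)
  have hcoord2 : ∀ n, hh n * (y n - xh n) = τ * (s n * max (|ht n| - τ) 0) := by
    intro n
    rw [hxhn n, hy n, hhh]; dsimp only
    split_ifs with h
    · rw [sub_self, mul_zero, max_eq_right (by linarith), mul_zero, mul_zero]
    · push_neg at h
      rcases lt_trichotomy (ht n) 0 with h1 | h1 | h1
      · rw [Real.sign_of_neg h1]
        rw [abs_of_neg h1] at h ⊢
        rw [max_eq_left (by linarith)]
        ring
      · exfalso; rw [h1, abs_zero] at h; linarith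
      · rw [Real.sign_of_pos h1, mul_one]
        rw [abs_of_pos h1] at h ⊢
        rw [max_eq_left (by linarith)]
        ring
  have hmem : xh ∈ C₁ := by
    rw [hC₁]
    show ∑ n, |xh n - y n| ≤ Δ
    rw [hΔ]
    exact le_of_eq (Finset.sum_congr rfl fun n _ => hcoord n)
  -- the inverse matrix
  have hinv : Km⁻¹ = Matrix.diagonal (fun n => (s n)⁻¹) := by
    rw [hKm]
    apply Matrix.inv_eq_right_inv
    rw [Matrix.diagonal_mul_diagonal]
    have : (fun n => s n * (s n)⁻¹) = fun _ : Fin N => (1 : ℝ) := by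
      funext n; exact mul_inv_cancel₀ (hsne n)
    rw [this, Matrix.diagonal_one]
  have hquad : ∀ v : Fin N → ℝ, v ⬝ᵥ Km⁻¹.mulVec v = ∑ n, (v n)^2 / s n := by
    intro v
    rw [hinv]
    simp only [dotProduct, Matrix.mulVec_diagonal]
    refine Finset.sum_congr rfl fun n _ => ?_
    field_simp
  refine ⟨hmem, fun x hx => ?_⟩
  rw [hC₁] at hx
  have hx' : ∑ n, |x n - y n| ≤ Δ := hx
  -- variational inequality: Σ hh n (x n - xh n) ≥ 0
  have hvar : 0 ≤ ∑ n, hh n * (x n - xh n) := by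
    have hsplit : ∀ n, hh n * (x n - xh n)
        = hh n * (x n - y n) + hh n * (y n - xh n) := by
      intro n; ring
    rw [Finset.sum_congr rfl fun n _ => hsplit n, Finset.sum_add_distrib]
    have h2 : ∑ n, hh n * (y n - xh n) = τ * Δ := by
      rw [hΔ, Finset.mul_sum]
      exact Finset.sum_congr rfl fun n _ => hcoord2 n
    have h1 : -(τ * Δ) ≤ ∑ n, hh n * (x n - y n) := by
      have hterm : ∀ n ∈ Finset.univ, -(τ * |x n - y n|) ≤ hh n * (x n - y n) := by
        intro n _
        have := neg_abs_le (hh n * (x n - y n))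
        have habs2 : |hh n * (x n - y n)| ≤ τ * |x n - y n| := by
          rw [abs_mul]
          exact mul_le_mul_of_nonneg_right (habs n) (abs_nonneg _)
        linarith
      calc -(τ * Δ) ≤ -(τ * ∑ n, |x n - y n|) := by
            have := mul_le_mul_of_nonneg_left hx' hτ.le
            linarith
        _ = ∑ n, -(τ * |x n - y n|) := by simp [Finset.mul_sum]
        _ ≤ ∑ n, hh n * (x n - y n) := Finset.sum_le_sum hterm
    linarith
  -- convexity: per coordinate
  have key : ∀ n ∈ Finset.univ, 2 * (hh n * (x n - xh n)) ≤ (x n)^2 / s n - (xh n)^2 / s n := by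
    intro n _
    rw [hxhn n]
    have h1 : (x n)^2 / s n - (s n * hh n)^2 / s n - 2 * (hh n * (x n - s n * hh n))
        = (x n - s n * hh n)^2 / s n := by
      have hne := hsne n
      field_simp; ring
    have h2 : 0 ≤ (x n - s n * hh n)^2 / s n :=
      div_nonneg (sq_nonneg _) (hs n).le
    linarith
  have hsum := Finset.sum_le_sum key
  rw [hquad x, hquad xh]
  have : ∑ n, (2 * (hh n * (x n - xh n))) = 2 * ∑ n, hh n * (x n - xh n) := by
    rw [Finset.mul_sum]
  rw [this] at hsum
  have h3 : ∑ n, ((x n)^2 / s n - (xh n)^2 / s n)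
      = (∑ n, (x n)^2 / s n) - ∑ n, (xh n)^2 / s n := Finset.sum_sub_distrib _ _
  rw [h3] at hsum
  linarith
end
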